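/- In H(d,q), any closed subwalk of the form (v, w, x, v) where all four vertices agree in all coordinates except coordinate i (i.e., a closed 3-walk within the K_q fiber of coordinate i through v) appearing in a closed walk W = K * (v,w,x,v) * K^{-1} based at the all-zeros vertex, is such that W is ×-homotopic rel endpoints to a product K' * U_i * K'^{-1} where U_i is a ground walk in coordinate i conjugated appropriately; in particular, W is equivalent to a ground walk in coordinate i. -/

import Mathlib

/-- The Hamming graph `H(d,q)`: vertices are functions `Fin d → Fin q`,
adjacent iff they differ in exactly one coordinate. -/
def hammingGraph (d q : ℕ) : SimpleGraph (Fin d → Fin q) where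
  Adj v w := ∃! i, v i ≠ w i
  symm := by
    constructor
    rintro v w ⟨i, hi, hu⟩
    exact ⟨i, hi.symm, fun j hj => hu j hj.symm⟩
  loopless := by
    constructor
    rintro v ⟨i, hi, -⟩
    exact hi rfl

/-- `l` is (the list of vertices of) a walk in `G` from `a` to `b`. -/
def IsWalkOn {V : Type*} (G : SimpleGraph V) (a b : V) (l : List V) : Prop :=
  l.Chain' G.Adj ∧ l.head? = some a ∧ l.getLast? = some b

/-- Elementary moves on walks: prunes (and their inverses, anti-prunes,
via symmetry) and spider moves. -/
inductive Move {V : Type*} (G : SimpleGraph V) : List V → List V → Prop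
  | prune (xs ys : List V) (u v : V) (huv : G.Adj u v) :
      Move G (xs ++ u :: v :: u :: ys) (xs ++ u :: ys)
  | spider (xs ys : List V) (u v v' w : V) (hne : v ≠ v')
      (h1 : G.Adj u v') (h2 : G.Adj v' w) :
      Move G (xs ++ u :: v :: w :: ys) (xs ++ u :: v' :: w :: ys)

/-- ×-homotopy rel endpoints: the equivalence relation generated by prunes,
anti-prunes and spider moves. -/
def Homotopic {V : Type*} (G : SimpleGraph V) : List V → List V → Prop :=
  Relation.EqvGen (Move G)

/-- Concatenation of walks sharing an endpoint. -/
def wcat {V : Type*} (l1 l2 : List V) : List V := l1 ++ l2.tail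

/-- Concatenation of a list of closed walks based at `z`. -/
def wprod {V : Type*} (z : V) (ws : List (List V)) : List V := ws.foldr wcat [z]

/-- `u` and `v` differ exactly in coordinate `i`. -/
def DiffAt {d q : ℕ} (u v : Fin d → Fin q) (i : Fin d) : Prop :=
  u i ≠ v i ∧ ∀ j, j ≠ i → u j = v j

/-- A ground walk in coordinate `i`: a closed 3-walk at the all-zeros vertex
whose intermediate vertices are nonzero only in coordinate `i`. -/
def IsGroundWalk (d q : ℕ) [NeZero q] (i : Fin d) (l : List (Fin d → Fin q)) : Prop :=
  ∃ a b : Fin q, a ≠ 0 ∧ b ≠ 0 ∧ a ≠ b ∧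
    l = [(0 : Fin d → Fin q), Function.update (0 : Fin d → Fin q) i a,
      Function.update (0 : Fin d → Fin q) i b, 0]

/-- Number of steps of a walk in which coordinate `i` changes. -/
def changeCount {d q : ℕ} (i : Fin d) : List (Fin d → Fin q) → ℕ
  | x :: y :: rest => (if x i = y i then 0 else 1) + changeCount i (y :: rest)
  | _ => 0

section Aux

variable {d q : ℕ}

lemma fiber_adj {a b : Fin d → Fin q} {i : Fin d}
    (h : a i ≠ b i) (h2 : ∀ j, j ≠ i → a j = b j) : (hammingGraph d q).Adj a b :=
  ⟨i, h, fun j hj => by_contra fun hji => hj (h2 j hji)⟩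

lemma fiber_ne {a b : Fin d → Fin q} {i : Fin d}
    (h : (hammingGraph d q).Adj a b) (h2 : ∀ j, j ≠ i → a j = b j) : a i ≠ b i := by
  obtain ⟨j, hj, -⟩ := h
  by_cases hji : j = i
  · exact hji ▸ hj
  · exact absurd (h2 j hji) hj

lemma ne_at_of_ne {a b : Fin d → Fin q} {i : Fin d}
    (h : a ≠ b) (h2 : ∀ j, j ≠ i → a j = b j) : a i ≠ b i := by
  intro hi
  refine h (funext fun k => ?_)
  by_cases hk : k = i
  · exact hk ▸ hi
  · exact h2 k hk

/-- Key step: move a fiber triangle one step down the conjugating walk. -/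
lemma step_lemma {i : Fin d} {u v w x : Fin d → Fin q}
    (huv : (hammingGraph d q).Adj u v)
    (hw : ∀ j, j ≠ i → w j = v j) (hx : ∀ j, j ≠ i → x j = v j)
    (h1 : (hammingGraph d q).Adj v w) (h2 : (hammingGraph d q).Adj w x)
    (h3 : (hammingGraph d q).Adj x v) :
    ∃ w' x', (∀ j, j ≠ i → w' j = u j) ∧ (∀ j, j ≠ i → x' j = u j) ∧
      (hammingGraph d q).Adj u w' ∧ (hammingGraph d q).Adj w' x' ∧
      (hammingGraph d q).Adj x' u ∧
      ∀ N tail, Homotopic (hammingGraph d q)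
        (N ++ u :: v :: w :: x :: v :: u :: tail)
        (N ++ u :: w' :: x' :: u :: tail) := by
  have hvw : v i ≠ w i := fiber_ne h1 (fun j hj => (hw j hj).symm)
  have hwx : w i ≠ x i := fiber_ne h2 (fun j hj => (hw j hj).trans (hx j hj).symm)
  have hxv : x i ≠ v i := fiber_ne h3 hx
  obtain ⟨j, hj, hju⟩ := id huv
  have huk : ∀ k, k ≠ j → u k = v k := fun k hk => by_contra fun h => hk (hju k h)
  by_cases hji : j = i
  · -- u is in the same fiber
    subst hji
    have hufib : ∀ k, k ≠ j → u k = v k := huk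
    by_cases huw : u = w
    · -- prune (u,v,u) at the front
      refine ⟨x, v, fun k hk => (hx k hk).trans (hufib k hk).symm,
        fun k hk => (hufib k hk).symm, huw ▸ h2, h3, huv.symm, ?_⟩
      intro N tail
      subst huw
      exact Relation.EqvGen.rel _ _ (Move.prune N (x :: v :: u :: tail) u v huv)
    · by_cases hux : u = x
      · refine ⟨v, w, fun k hk => (hufib k hk).symm,
          fun k hk => (hw k hk).trans (hufib k hk).symm, huv, h1, by rw [hux]; exact h2, ?_⟩
        intro N tail
        have hm : Move (hammingGraph d q)
            ((N ++ [u, v, w]) ++ u :: v :: u :: tail) ((N ++ [u, v, w]) ++ u :: tail) :=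
          Move.prune (N ++ [u, v, w]) tail u v huv
        subst hux
        exact Relation.EqvGen.rel _ _ (by simpa using hm)
      · -- generic fiber case: spider then prune
        have hwu : (hammingGraph d q).Adj w u :=
          fiber_adj (ne_at_of_ne (fun h => huw h.symm)
              (fun k hk => (hw k hk).trans (hufib k hk).symm))
            (fun k hk => (hw k hk).trans (hufib k hk).symm)
        refine ⟨v, w, fun k hk => (hufib k hk).symm,
          fun k hk => (hw k hk).trans (hufib k hk).symm, huv, h1, hwu, ?_⟩
        intro N tail
        have m1 : Move (hammingGraph d q)
            ((N ++ [u, v]) ++ w :: x :: v :: u :: tail)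
            ((N ++ [u, v]) ++ w :: u :: v :: u :: tail) :=
          Move.spider (N ++ [u, v]) (u :: tail) w x u v (Ne.symm hux) hwu huv
        have m2 : Move (hammingGraph d q)
            ((N ++ [u, v, w]) ++ u :: v :: u :: tail) ((N ++ [u, v, w]) ++ u :: tail) :=
          Move.prune (N ++ [u, v, w]) tail u v huv
        exact Relation.EqvGen.trans _ _ _
          (Relation.EqvGen.rel _ _ (by simpa using m1))
          (Relation.EqvGen.rel _ _ (by simpa using m2))
  · -- u differs from v in a coordinate j ≠ i
    have hui : u i = v i := huk i fun h => hji h.symm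
    set w' := Function.update w j (u j) with hw'def
    set x' := Function.update x j (u j) with hx'def
    have hw'j : w' j = u j := Function.update_self j (u j) w
    have hx'j : x' j = u j := Function.update_self j (u j) x
    have hw'k : ∀ k, k ≠ j → w' k = w k := fun k hk => Function.update_of_ne hk _ _
    have hx'k : ∀ k, k ≠ j → x' k = x k := fun k hk => Function.update_of_ne hk _ _
    have hij : (i : Fin d) ≠ j := fun h => hji h.symm
    have hw'fib : ∀ k, k ≠ i → w' k = u k := by
      intro k hk
      by_cases hkj : k = j
      · subst hkj; exact hw'j
      · exact ((hw'k k hkj).trans (hw k hk)).trans (huk k hkj).symm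
    have hx'fib : ∀ k, k ≠ i → x' k = u k := by
      intro k hk
      by_cases hkj : k = j
      · subst hkj; exact hx'j
      · exact ((hx'k k hkj).trans (hx k hk)).trans (huk k hkj).symm
    have hw'i : w' i = w i := hw'k i hij
    have hx'i : x' i = x i := hx'k i hij
    have huw' : (hammingGraph d q).Adj u w' := by
      refine fiber_adj (i := i) ?_ (fun k hk => (hw'fib k hk).symm)
      rw [hw'i, hui]; exact hvw
    have hw'w : (hammingGraph d q).Adj w' w := by
      refine fiber_adj (i := j) ?_ hw'k
      rw [hw'j, hw j hji]; exact hj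
    have hvw' : v ≠ w' := fun h => hj (by rw [← hw'j, ← h])
    have hw'x' : (hammingGraph d q).Adj w' x' := by
      refine fiber_adj (i := i) ?_ ?_
      · rw [hw'i, hx'i]; exact hwx
      · intro k hk
        by_cases hkj : k = j
        · subst hkj; rw [hw'j, hx'j]
        · rw [hw'k k hkj, hx'k k hkj, hw k hk, hx k hk]
    have hwx' : w ≠ x' := fun h => hj (by rw [← hx'j, ← h, hw j hji])
    have hx'x : (hammingGraph d q).Adj x' x := by
      refine fiber_adj (i := j) ?_ hx'k
      rw [hx'j, hx j hji]; exact hj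
    have hx'u : (hammingGraph d q).Adj x' u := by
      refine fiber_adj (i := i) ?_ hx'fib
      rw [hx'i, hui]; exact hxv
    have hxu : x ≠ u := fun h => hj (by rw [← h, hx j hji])
    refine ⟨w', x', hw'fib, hx'fib, huw', hw'x', hx'u, ?_⟩
    intro N tail
    have m1 : Move (hammingGraph d q)
        (N ++ u :: v :: w :: x :: v :: u :: tail)
        (N ++ u :: w' :: w :: x :: v :: u :: tail) :=
      Move.spider N (x :: v :: u :: tail) u v w' w hvw' huw' hw'w
    have m2 : Move (hammingGraph d q)
        ((N ++ [u]) ++ w' :: w :: x :: v :: u :: tail)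
        ((N ++ [u]) ++ w' :: x' :: x :: v :: u :: tail) :=
      Move.spider (N ++ [u]) (v :: u :: tail) w' w x' x hwx' hw'x' hx'x
    have m3 : Move (hammingGraph d q)
        ((N ++ [u, w']) ++ x' :: x :: v :: u :: tail)
        ((N ++ [u, w']) ++ x' :: u :: v :: u :: tail) :=
      Move.spider (N ++ [u, w']) (u :: tail) x' x u v hxu hx'u huv
    have m4 : Move (hammingGraph d q)
        ((N ++ [u, w', x']) ++ u :: v :: u :: tail) ((N ++ [u, w', x']) ++ u :: tail) :=
      Move.prune (N ++ [u, w', x']) tail u v huv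
    exact Relation.EqvGen.trans _ _ _ (Relation.EqvGen.rel _ _ m1)
      (Relation.EqvGen.trans _ _ _ (Relation.EqvGen.rel _ _ (by simpa using m2))
        (Relation.EqvGen.trans _ _ _ (Relation.EqvGen.rel _ _ (by simpa using m3))
          (Relation.EqvGen.rel _ _ (by simpa using m4))))

variable [NeZero q]

lemma main_lemma (i : Fin d) :
    ∀ n (K : List (Fin d → Fin q)) (v w x : Fin d → Fin q), K.length ≤ n →
      IsWalkOn (hammingGraph d q) 0 v K →
      (∀ j, j ≠ i → w j = v j) → (∀ j, j ≠ i → x j = v j) →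
      (hammingGraph d q).Adj v w → (hammingGraph d q).Adj w x →
      (hammingGraph d q).Adj x v →
      ∃ U, IsGroundWalk d q i U ∧
        Homotopic (hammingGraph d q) (K ++ w :: x :: v :: K.reverse.tail) U := by
  intro n
  induction n with
  | zero =>
    intro K v w x hlen hK
    rw [Nat.le_zero, List.length_eq_zero_iff] at hlen
    subst hlen
    simp [IsWalkOn] at hK
  | succ n ih =>
    intro K v w x hlen hK hw hx h1 h2 h3
    rcases K.eq_nil_or_concat with rfl | ⟨M, c, rfl⟩
    · simp [IsWalkOn] at hK
    · simp only [List.concat_eq_append] at hlen hK ⊢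
      have hc : c = v := by
        have := hK.2.2
        rw [List.getLast?_concat] at this
        exact Option.some_injective _ this
      rw [hc] at hK ⊢
      rcases M.eq_nil_or_concat with rfl | ⟨N, u, rfl⟩
      · -- K = [v], so v = 0
        have hv0 : (0 : Fin d → Fin q) = v := by
          have := hK.2.1
          simp at this
          exact this.symm
        subst hv0
        refine ⟨[(0 : Fin d → Fin q), w, x, 0], ⟨w i, x i, ?_, ?_, ?_, ?_⟩,
          by simpa [Homotopic] using Relation.EqvGen.refl _⟩
        · exact (fiber_ne h1 (fun j hj => (hw j hj).symm)).symm  -- w i ≠ 0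
        · exact fiber_ne h3 hx  -- x i ≠ 0
        · exact fun h => (fiber_ne h2 (fun j hj => (hw j hj).trans (hx j hj).symm)) h
        · have hwu : w = Function.update (0 : Fin d → Fin q) i (w i) := by
            funext k
            by_cases hk : k = i
            · subst hk; simp
            · simp [Function.update_of_ne hk, hw k hk]
          have hxu : x = Function.update (0 : Fin d → Fin q) i (x i) := by
            funext k
            by_cases hk : k = i
            · subst hk; simp
            · simp [Function.update_of_ne hk, hx k hk]
          rw [← hwu, ← hxu]
      · -- K = N ++ [u] ++ [v]
        simp only [List.concat_eq_append] at hlen hK ⊢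
        have hchain := hK.1
        rw [List.Chain', List.isChain_append] at hchain
        obtain ⟨hcM, -, hrel⟩ := hchain
        have huv : (hammingGraph d q).Adj u v := by
          refine hrel u ?_ v rfl
          rw [List.getLast?_concat]
          rfl
        have hM : IsWalkOn (hammingGraph d q) 0 u (N ++ [u]) := by
          refine ⟨hcM, ?_, List.getLast?_concat⟩
          have := hK.2.1
          rwa [List.head?_append_of_ne_nil _ (by simp)] at this
        obtain ⟨w', x', hw'f, hx'f, a1, a2, a3, hhom⟩ :=
          step_lemma huv hw hx h1 h2 h3
        obtain ⟨U, hU, hUhom⟩ := ih (N ++ [u]) u w' x'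
          (by simp at hlen ⊢; omega) hM hw'f hx'f a1 a2 a3
        refine ⟨U, hU, Relation.EqvGen.trans _ _ _ ?_ hUhom⟩
        have := hhom N N.reverse
        have e1 : (N ++ [u] ++ [v]) ++ w :: x :: v :: (N ++ [u] ++ [v]).reverse.tail
            = N ++ u :: v :: w :: x :: v :: u :: N.reverse := by simp
        have e2 : (N ++ [u]) ++ w' :: x' :: u :: (N ++ [u]).reverse.tail
            = N ++ u :: w' :: x' :: u :: N.reverse := by simp
        rw [e1, e2]
        exact this

end Aux

/-- a closed walk of the form `K * (v,w,x,v) * K⁻¹` based at the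
all-zeros vertex, where the closed 3-walk `(v,w,x,v)` lies in the `K_q` fiber of
coordinate `i`, is ×-homotopic rel endpoints to a ground walk in coordinate `i`. -/
theorem stmt14 (d q : ℕ) [NeZero q] (hq : 3 ≤ q) (i : Fin d)
    (v w x : Fin d → Fin q) (K : List (Fin d → Fin q))
    (hK : IsWalkOn (hammingGraph d q) 0 v K)
    (hw : ∀ j, j ≠ i → w j = v j) (hx : ∀ j, j ≠ i → x j = v j)
    (h1 : (hammingGraph d q).Adj v w) (h2 : (hammingGraph d q).Adj w x)
    (h3 : (hammingGraph d q).Adj x v) :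
    ∃ U, IsGroundWalk d q i U ∧
      Homotopic (hammingGraph d q) (wcat (wcat K [v, w, x, v]) K.reverse) U := by
  obtain ⟨U, hU, hhom⟩ := main_lemma i K.length K v w x le_rfl hK hw hx h1 h2 h3
  refine ⟨U, hU, ?_⟩
  have : wcat (wcat K [v, w, x, v]) K.reverse = K ++ w :: x :: v :: K.reverse.tail := by
    simp [wcat]
  rwa [this]
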